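/- Let (X,ρ) be a metric space, let P be an abstract porosity on X, and let A ⊆ X be a set that is not σ-P-porous. Then the set of all points x ∈ K_P(A) at which K_P(A) is not P-porous (i.e., at which P(x, K_P(A)) fails) is dense in K_P(A). -/

import Mathlib

open Metric Filter Set

/-- An abstract porosity on a metric space `X`: a relation between points and subsets
of `X` satisfying the axioms (A1), (A2), (A3). -/
structure AbstractPorosity (X : Type*) [MetricSpace X] where
  rel : X → Set X → Prop
  mono : ∀ (x : X) (A B : Set X), A ⊆ B → rel x B → rel x A
  loc : ∀ (x : X) (A : Set X), rel x A ↔ ∃ r > 0, rel x (A ∩ Metric.ball x r)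
  clos : ∀ (x : X) (A : Set X), rel x A ↔ rel x (closure A)

variable {X : Type*} [MetricSpace X]

/-- `A` is `P`-porous if `P(x,A)` holds at each point `x ∈ A`. -/
def AbstractPorosity.Porous (P : AbstractPorosity X) (A : Set X) : Prop :=
  ∀ x ∈ A, P.rel x A

/-- `A` is σ-`P`-porous if it is a countable union of `P`-porous sets. -/
def AbstractPorosity.SigmaPorous (P : AbstractPorosity X) (A : Set X) : Prop :=
  ∃ f : ℕ → Set X, (∀ n, P.Porous (f n)) ∧ A = ⋃ n, f n

/-- `A` is σ-`P`-porous at `x` if some `A ∩ B(x,r)` (r>0) is σ-`P`-porous. -/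
def AbstractPorosity.SigmaPorousAt (P : AbstractPorosity X) (A : Set X) (x : X) : Prop :=
  ∃ r > 0, P.SigmaPorous (A ∩ Metric.ball x r)

/-- The kernel `K_P(A)`: points of `A` at which `A` is not σ-`P`-porous. -/
def AbstractPorosity.kernel (P : AbstractPorosity X) (A : Set X) : Set X :=
  {x ∈ A | ¬ P.SigmaPorousAt A x}

namespace AbstractPorosity

lemma sigmaPorous_mono (P : AbstractPorosity X) {A B : Set X}
    (h : P.SigmaPorous B) (hAB : A ⊆ B) : P.SigmaPorous A := by
  obtain ⟨f, hf, hBu⟩ := h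
  refine ⟨fun n => A ∩ f n,
    fun n x hx => P.mono x _ (f n) inter_subset_right (hf n x hx.2), ?_⟩
  ext y
  simp only [mem_iUnion, mem_inter_iff]
  constructor
  · intro hy
    have : y ∈ ⋃ n, f n := hBu ▸ hAB hy
    obtain ⟨n, hn⟩ := mem_iUnion.1 this
    exact ⟨n, hy, hn⟩
  · rintro ⟨n, hy, _⟩; exact hy

lemma sigmaPorous_union (P : AbstractPorosity X) {A B : Set X}
    (hA : P.SigmaPorous A) (hB : P.SigmaPorous B) : P.SigmaPorous (A ∪ B) := by
  obtain ⟨f, hf, rfl⟩ := hA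
  obtain ⟨g, hg, rfl⟩ := hB
  refine ⟨fun n => if n % 2 = 0 then f (n / 2) else g (n / 2), fun n => ?_, ?_⟩
  · dsimp only
    split
    · exact hf _
    · exact hg _
  · ext y
    simp only [mem_union, mem_iUnion]
    constructor
    · rintro (⟨n, hn⟩ | ⟨n, hn⟩)
      · refine ⟨2 * n, ?_⟩
        have h1 : (2 * n) % 2 = 0 := by omega
        have h2 : (2 * n) / 2 = n := by omega
        simpa [h1, h2] using hn
      · refine ⟨2 * n + 1, ?_⟩
        have h1 : ¬ (2 * n + 1) % 2 = 0 := by omega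
        have h2 : (2 * n + 1) / 2 = n := by omega
        simpa [h1, h2] using hn
    · rintro ⟨n, hn⟩
      by_cases h : n % 2 = 0
      · left; exact ⟨n / 2, by simpa [h] using hn⟩
      · right; exact ⟨n / 2, by simpa [h] using hn⟩

/-- σ-P-porosity is a local property: if `A` is σ-P-porous at each of its points,
then `A` is σ-P-porous. -/
lemma sigmaPorous_of_forall_sigmaPorousAt (P : AbstractPorosity X) (A : Set X)
    (h : ∀ x ∈ A, P.SigmaPorousAt A x) : P.SigmaPorous A := by
  classical
  simp only [SigmaPorousAt] at h
  choose! r hr hσ using h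
  simp only [SigmaPorous] at hσ
  choose! f hfp hfu using hσ
  have wf : WellFounded (WellOrderingRel (α := X)) := IsWellFounded.wf
  set S : X → Set X := fun x => {z | z ∈ A ∧ x ∈ ball z (r z)} with hS
  have hSne : ∀ x ∈ A, (S x).Nonempty := fun x hx => ⟨x, hx, mem_ball_self (hr x hx)⟩
  set c : X → X := fun x => if hx : x ∈ A then wf.min (S x) (hSne x hx) else x with hc
  have hcS : ∀ x ∈ A, c x ∈ S x := by
    intro x hx
    simp only [hc, dif_pos hx]
    exact wf.min_mem _ _
  have hcA : ∀ x ∈ A, c x ∈ A := fun x hx => (hcS x hx).1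
  have hcb : ∀ x ∈ A, x ∈ ball (c x) (r (c x)) := fun x hx => (hcS x hx).2
  have hcmin : ∀ x ∈ A, ∀ z ∈ S x, ¬ WellOrderingRel z (c x) := by
    intro x hx z hz
    simp only [hc, dif_pos hx]
    exact wf.not_lt_min _ hz
  set Q : ℕ → ℕ → Set X := fun k m =>
    {x | x ∈ A ∧ x ∈ f (c x) k ∧ ball x (1 / ((m : ℝ) + 1)) ⊆ ball (c x) (r (c x))} with hQ
  have hQpor : ∀ k m, P.Porous (Q k m) := by
    intro k m x hx
    obtain ⟨hxA, hxf, hxb⟩ := hx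
    have hsub : Q k m ∩ ball x (1 / ((m : ℝ) + 1)) ⊆ f (c x) k := by
      rintro y ⟨⟨hyA, hyf, hyb⟩, hyball⟩
      rcases trichotomous (r := WellOrderingRel) (c y) (c x) with hlt | heq | hgt
      · exfalso
        refine hcmin x hxA (c y) ⟨hcA y hyA, hyb ?_⟩ hlt
        rw [mem_ball] at hyball ⊢
        rw [dist_comm]
        exact hyball
      · rwa [heq] at hyf
      · exact absurd hgt (hcmin y hyA (c x) ⟨hcA x hxA, hxb hyball⟩)
    have hpos : (0 : ℝ) < 1 / ((m : ℝ) + 1) := by positivity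
    exact (P.loc x (Q k m)).2 ⟨1 / ((m : ℝ) + 1), hpos,
      P.mono x _ (f (c x) k) hsub (hfp (c x) (hcA x hxA) k x hxf)⟩
  refine ⟨fun n => Q (Nat.unpair n).1 (Nat.unpair n).2, fun n => hQpor _ _, ?_⟩
  ext x
  simp only [mem_iUnion]
  constructor
  · intro hx
    have hxball := hcb x hx
    have hmem : x ∈ ⋃ n, f (c x) n := (hfu (c x) (hcA x hx)) ▸ ⟨hx, hxball⟩
    obtain ⟨k, hk⟩ := mem_iUnion.1 hmem
    have hε : (0 : ℝ) < r (c x) - dist x (c x) := by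
      rw [mem_ball] at hxball; linarith
    obtain ⟨m, hm⟩ := exists_nat_one_div_lt hε
    refine ⟨Nat.pair k m, ?_⟩
    rw [Nat.unpair_pair]
    refine ⟨hx, hk, fun z hz => ?_⟩
    rw [mem_ball] at hz ⊢
    have ht := dist_triangle z x (c x)
    linarith
  · rintro ⟨n, hn⟩
    exact hn.1

end AbstractPorosity

/-- If `A` is not σ-`P`-porous, then the set of points of `K_P(A)` at which `K_P(A)`
is not `P`-porous is dense in `K_P(A)`. -/
theorem dense_not_porousAt_points_of_kernel {X : Type*} [MetricSpace X]
    (P : AbstractPorosity X) (A : Set X) (hA : ¬ P.SigmaPorous A) :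
    P.kernel A ⊆ closure {x ∈ P.kernel A | ¬ P.rel x (P.kernel A)} := by
  intro x hx
  by_contra hcl
  rw [Metric.mem_closure_iff] at hcl
  push_neg at hcl
  obtain ⟨ε, hε, hsep⟩ := hcl
  set K := P.kernel A with hK
  have hKA : K ⊆ A := fun y hy => hy.1
  apply hx.2
  refine ⟨ε, hε, ?_⟩
  have hdecomp : A ∩ ball x ε = (K ∩ ball x ε) ∪ ((A \ K) ∩ ball x ε) := by
    ext y
    by_cases hyK : y ∈ K
    · simp [hyK, hKA hyK]
    · simp only [mem_inter_iff, mem_union, mem_diff]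
      tauto
  rw [hdecomp]
  apply P.sigmaPorous_union
  · refine ⟨fun _ => K ∩ ball x ε, fun n y hy => ?_, (Set.iUnion_const _).symm⟩
    have hyK := hy.1
    have hrel : P.rel y K := by
      by_contra hrel
      have hyS : y ∈ {z ∈ K | ¬ P.rel z K} := ⟨hyK, hrel⟩
      have h1 := hsep y hyS
      have h2 : dist y x < ε := mem_ball.1 hy.2
      rw [dist_comm] at h1
      linarith
    exact P.mono y _ K inter_subset_left hrel
  · apply P.sigmaPorous_of_forall_sigmaPorousAt
    rintro y ⟨⟨hyA, hyK⟩, hyb⟩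
    have hyσ : P.SigmaPorousAt A y := by
      by_contra hcon
      exact hyK ⟨hyA, hcon⟩
    obtain ⟨s, hs, hσ⟩ := hyσ
    exact ⟨s, hs, P.sigmaPorous_mono hσ (fun z hz => ⟨hz.1.1.1, hz.2⟩)⟩
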